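/- Let v_0,…,v_{n−1} ∈ ℝ² be the vertices, in counterclockwise order, of a convex n-gon, let σ > 0 and let m ≥ 1 be an integer with n > m + 2. Suppose that for every index i (mod n) the diagonal (v_i, v_{i+m+1}) has a unique witness w_i — i.e. v_i ≺ w_i ≺ v_{i+m+1}, dist(w_i, [v_i, v_{i+m+1}]) > σ, and dist(x, [v_i, v_{i+m+1}]) ≤ σ for every other vertex x with v_i ≺ x ≺ v_{i+m+1} — and that the map i ↦ w_i is a bijection of the vertex set. Then there exists an integer r with 0 < r ≤ m such that w_i = v_{i+r} for every i. -/

import Mathlib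

/-!
STATEMENT 14: Let v_0,…,v_{n−1} ∈ ℝ² be the vertices, in counterclockwise order,
of a convex n-gon, let σ > 0 and let m ≥ 1 be an integer with n > m + 2.
Suppose that for every index i (mod n) the diagonal (v_i, v_{i+m+1}) has a
unique witness w_i — i.e. v_i ≺ w_i ≺ v_{i+m+1},
dist(w_i, [v_i, v_{i+m+1}]) > σ, and dist(x, [v_i, v_{i+m+1}]) ≤ σ for every
other vertex x with v_i ≺ x ≺ v_{i+m+1} — and that the map i ↦ w_i is a
bijection of the vertex set.  Then there exists an integer r with 0 < r ≤ m such
that w_i = v_{i+r} for every i.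
-/

noncomputable section

abbrev Pt := EuclideanSpace ℝ (Fin 2)

/-- `ccw3 a b c` : the triple `(a, b, c)` is positively (counterclockwise) oriented. -/
def ccw3 (a b c : Pt) : Prop :=
  0 < (b 0 - a 0) * (c 1 - a 1) - (b 1 - a 1) * (c 0 - a 0)

/-- `CBtw i j l` : in the counterclockwise cyclic order of `ZMod n`, a traversal
starting at `i` meets `j` strictly after `i` and strictly before `l`. -/
def CBtw {n : ℕ} (i j l : ZMod n) : Prop :=
  0 < (j - i).val ∧ (j - i).val < (l - i).val

/-- The points `v 0, v 1, …, v (n-1)` are the vertices, in counterclockwise order,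
of a convex `n`-gon. -/
def ConvexCCW {n : ℕ} (v : ZMod n → Pt) : Prop :=
  ∀ i j l : ZMod n, CBtw i j l → ccw3 (v i) (v j) (v l)

def cr (a b c : Pt) : ℝ :=
  (b 0 - a 0) * (c 1 - a 1) - (b 1 - a 1) * (c 0 - a 0)

lemma coord_comb (t : ℝ) (u v : Pt) (j : Fin 2) :
    ((1 - t) • u + t • v) j = (1 - t) * u j + t * v j := by
  simp [PiLp.add_apply, PiLp.smul_apply, smul_eq_mul]

lemma seg_mem_iff {u v z : Pt} :
    z ∈ segment ℝ u v ↔ ∃ t : ℝ, 0 ≤ t ∧ t ≤ 1 ∧ z = (1 - t) • u + t • v := by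
  rw [segment_eq_image]
  constructor
  · rintro ⟨t, ⟨h0, h1⟩, rfl⟩; exact ⟨t, h0, h1, rfl⟩
  · rintro ⟨t, h0, h1, rfl⟩; exact ⟨t, ⟨h0, h1⟩, rfl⟩

lemma seg_compact (u v : Pt) : IsCompact (segment ℝ u v) := by
  rw [segment_eq_image]
  exact isCompact_Icc.image (by continuity)

lemma crC (t : ℝ) (u v x y : Pt) :
    cr u v ((1 - t) • x + t • y) = (1 - t) * cr u v x + t * cr u v y := by
  simp only [cr, coord_comb]; ring

lemma L_pos {A B C : Pt} (h : 0 < cr A B C) :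
    0 < (B 0 - A 0) ^ 2 + (B 1 - A 1) ^ 2 := by
  rcases lt_or_ge 0 ((B 0 - A 0) ^ 2 + (B 1 - A 1) ^ 2) with h' | h'
  · exact h'
  · exfalso
    have h0 : B 0 - A 0 = 0 := by nlinarith [sq_nonneg (B 0 - A 0), sq_nonneg (B 1 - A 1)]
    have h1 : B 1 - A 1 = 0 := by nlinarith [sq_nonneg (B 0 - A 0), sq_nonneg (B 1 - A 1)]
    have : cr A B C = 0 := by
      show (B 0 - A 0) * (C 1 - A 1) - (B 1 - A 1) * (C 0 - A 0) = 0
      rw [h0, h1]; ring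
    linarith

lemma side_neg (L1 L2 S1 S2 P g1 g2 h1 h2 : Pt) (σ : ℝ) (x : ℝ)
    (hx0 : 0 ≤ x) (hx1 : x ≤ 1)
    (hS1 : 0 < cr L1 L2 S1) (hS2 : cr L1 L2 S2 < 0) (hP : cr L1 L2 P < 0)
    (hGL1 : cr g1 g2 L1 < 0) (hGL2 : 0 < cr g1 g2 L2)
    (hGP : 0 ≤ cr g1 g2 P) (hGS1 : 0 ≤ cr g1 g2 S1) (hGS2 : 0 ≤ cr g1 g2 S2)
    (hHL1 : 0 < cr h1 h2 L1) (hHL2 : cr h1 h2 L2 < 0)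
    (hHP : 0 ≤ cr h1 h2 P) (hHS1 : 0 ≤ cr h1 h2 S1) (hHS2 : 0 ≤ cr h1 h2 S2)
    (hF : ∀ z ∈ segment ℝ L1 L2, σ < dist P z)
    (hdX : dist P ((1 - x) • S1 + x • S2) ≤ σ) :
    cr L1 L2 ((1 - x) • S1 + x • S2) < 0 := by
  set X : Pt := (1 - x) • S1 + x • S2 with hXdef
  by_contra hcon
  push_neg at hcon
  have hden : cr L1 L2 P - cr L1 L2 X < 0 := by linarith
  set t0 : ℝ := cr L1 L2 P / (cr L1 L2 P - cr L1 L2 X) with ht0def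
  have ht00 : 0 < t0 := div_pos_of_neg_of_neg hP hden
  have ht01 : t0 ≤ 1 := by
    rw [ht0def, div_le_one_of_neg hden]; linarith
  set v : Pt := (1 - t0) • P + t0 • X with hvdef
  have hne : cr L1 L2 P - cr L1 L2 X ≠ 0 := ne_of_lt hden
  have ht0m : t0 * (cr L1 L2 P - cr L1 L2 X) = cr L1 L2 P := by
    rw [ht0def]; exact div_mul_cancel₀ _ hne
  have hv : cr L1 L2 v = 0 := by
    rw [hvdef, crC]
    linear_combination -ht0m
  have hXc : ∀ j : Fin 2, X j = (1 - x) * S1 j + x * S2 j := fun j => coord_comb x S1 S2 j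
  have hvc : ∀ j : Fin 2, v j = (1 - t0) * P j + t0 * X j := fun j => coord_comb t0 P X j
  have hGX : 0 ≤ cr g1 g2 X := by
    rw [hXdef, crC]
    have := mul_nonneg (by linarith : (0:ℝ) ≤ 1 - x) hGS1
    have := mul_nonneg hx0 hGS2
    linarith
  have hHX : 0 ≤ cr h1 h2 X := by
    rw [hXdef, crC]
    have := mul_nonneg (by linarith : (0:ℝ) ≤ 1 - x) hHS1
    have := mul_nonneg hx0 hHS2
    linarith
  have hGv : 0 ≤ cr g1 g2 v := by
    rw [hvdef, crC]
    have := mul_nonneg (by linarith : (0:ℝ) ≤ 1 - t0) hGP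
    have := mul_nonneg (le_of_lt ht00) hGX
    linarith
  have hHv : 0 ≤ cr h1 h2 v := by
    rw [hvdef, crC]
    have := mul_nonneg (by linarith : (0:ℝ) ≤ 1 - t0) hHP
    have := mul_nonneg (le_of_lt ht00) hHX
    linarith
  -- line parameter
  have hv' : (L2 0 - L1 0) * (v 1 - L1 1) - (L2 1 - L1 1) * (v 0 - L1 0) = 0 := hv
  set L : ℝ := (L2 0 - L1 0) ^ 2 + (L2 1 - L1 1) ^ 2 with hLdef
  have hL : 0 < L := L_pos hS1
  set μ : ℝ := ((v 0 - L1 0) * (L2 0 - L1 0) + (v 1 - L1 1) * (L2 1 - L1 1)) / L with hμdef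
  have hμL : μ * L = (v 0 - L1 0) * (L2 0 - L1 0) + (v 1 - L1 1) * (L2 1 - L1 1) :=
    div_mul_cancel₀ _ (ne_of_gt hL)
  have key0 : (v 0 - L1 0 - μ * (L2 0 - L1 0)) * L = 0 := by
    linear_combination (-(L2 0 - L1 0)) * hμL + (-(L2 1 - L1 1)) * hv'
  have key1 : (v 1 - L1 1 - μ * (L2 1 - L1 1)) * L = 0 := by
    linear_combination (-(L2 1 - L1 1)) * hμL + (L2 0 - L1 0) * hv'
  have hrep0 : v 0 = L1 0 + μ * (L2 0 - L1 0) := by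
    rcases mul_eq_zero.mp key0 with h | h
    · linarith
    · exact absurd h (ne_of_gt hL)
  have hrep1 : v 1 = L1 1 + μ * (L2 1 - L1 1) := by
    rcases mul_eq_zero.mp key1 with h | h
    · linarith
    · exact absurd h (ne_of_gt hL)
  rcases lt_or_ge μ 0 with hμ | hμ0
  · -- μ < 0 : functional G gives contradiction
    have hGline : cr g1 g2 v = (1 - μ) * cr g1 g2 L1 + μ * cr g1 g2 L2 := by
      show (g2 0 - g1 0) * (v 1 - g1 1) - (g2 1 - g1 1) * (v 0 - g1 0) = _
      rw [hrep0, hrep1]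
      show _ = (1 - μ) * ((g2 0 - g1 0) * (L1 1 - g1 1) - (g2 1 - g1 1) * (L1 0 - g1 0))
          + μ * ((g2 0 - g1 0) * (L2 1 - g1 1) - (g2 1 - g1 1) * (L2 0 - g1 0))
      ring
    have hneg : μ * (cr g1 g2 L2 - cr g1 g2 L1) < 0 :=
      mul_neg_of_neg_of_pos hμ (by linarith)
    have expand : (1 - μ) * cr g1 g2 L1 + μ * cr g1 g2 L2
        = cr g1 g2 L1 + μ * (cr g1 g2 L2 - cr g1 g2 L1) := by ring
    have : cr g1 g2 v < 0 := by
      rw [hGline, expand]; linarith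
    linarith
  rcases lt_or_ge 1 μ with hμ1 | hμ1
  · -- μ > 1 : functional H gives contradiction
    have hHline : cr h1 h2 v = (1 - μ) * cr h1 h2 L1 + μ * cr h1 h2 L2 := by
      show (h2 0 - h1 0) * (v 1 - h1 1) - (h2 1 - h1 1) * (v 0 - h1 0) = _
      rw [hrep0, hrep1]
      show _ = (1 - μ) * ((h2 0 - h1 0) * (L1 1 - h1 1) - (h2 1 - h1 1) * (L1 0 - h1 0))
          + μ * ((h2 0 - h1 0) * (L2 1 - h1 1) - (h2 1 - h1 1) * (L2 0 - h1 0))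
      ring
    have t1 : (1 - μ) * cr h1 h2 L1 < 0 := mul_neg_of_neg_of_pos (by linarith) hHL1
    have t2 : μ * cr h1 h2 L2 < 0 := mul_neg_of_pos_of_neg (by linarith) hHL2
    have : cr h1 h2 v < 0 := by rw [hHline]; linarith
    linarith
  · -- 0 ≤ μ ≤ 1 : v lies on the segment [L1, L2], too close to P
    have hveq : v = (1 - μ) • L1 + μ • L2 := by
      ext j
      rw [coord_comb μ L1 L2]
      fin_cases j
      · simpa using hrep0.trans (by ring)
      · simpa using hrep1.trans (by ring)
    have hvmem : v ∈ segment ℝ L1 L2 := seg_mem_iff.mpr ⟨μ, hμ0, hμ1, hveq⟩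
    have hfar := hF v hvmem
    have hvseg : v ∈ segment ℝ P X := seg_mem_iff.mpr ⟨t0, le_of_lt ht00, ht01, rfl⟩
    have hsum := dist_add_dist_of_mem_segment hvseg
    have hnn : (0:ℝ) ≤ dist v X := dist_nonneg
    linarith

lemma crA (t : ℝ) (x y u v : Pt) :
    cr ((1 - t) • x + t • y) u v = (1 - t) * cr x u v + t * cr y u v := by
  simp only [cr, coord_comb]; ring

lemma crB (t : ℝ) (u x y v : Pt) :
    cr u ((1 - t) • x + t • y) v = (1 - t) * cr u x v + t * cr u y v := by
  simp only [cr, coord_comb]; ring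

lemma crzz (u v : Pt) : cr u v v = 0 := by simp only [cr]; ring
lemma cruvu (u v : Pt) : cr u v u = 0 := by simp only [cr]; ring
lemma cruuw (u w : Pt) : cr u u w = 0 := by simp only [cr]; ring
lemma rot (u v w : Pt) : cr u v w = cr v w u := by simp only [cr]; ring
lemma sw (u v w : Pt) : cr u v w = -cr u w v := by simp only [cr]; ring

private lemma keylin {A C xx : ℝ} (h : (1 - xx) * A + xx * C < 0) : A < xx * (A - C) := by
  nlinarith

private lemma combo_pos {A B zz : ℝ} (h1 : 0 < A) (h2 : 0 < B) (hz0 : 0 ≤ zz) (hz1 : zz ≤ 1) :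
    0 < (1 - zz) * A + zz * B := by nlinarith [mul_nonneg hz0 (le_of_lt h2), mul_nonneg (by linarith : (0:ℝ) ≤ 1 - zz) (le_of_lt h1)]

private lemma tri_pos {A B C s t : ℝ} (h1 : 0 < A) (h2 : 0 < B) (h3 : 0 < C)
    (hs0 : 0 < s) (hs1 : s ≤ 1) (ht0 : 0 < t) (ht1 : t ≤ 1) :
    0 < (1 - s) * ((1 - t) * 0 + t * A) + s * ((1 - t) * B + t * C) := by
  nlinarith [mul_pos (mul_pos hs0 ht0) h3, mul_nonneg (mul_nonneg (by linarith : (0:ℝ) ≤ 1 - s) (le_of_lt ht0)) (le_of_lt h1), mul_nonneg (mul_nonneg (le_of_lt hs0) (by linarith : (0:ℝ) ≤ 1 - t)) (le_of_lt h2)]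

set_option maxHeartbeats 2000000 in
lemma hex (a b p q c d : Pt) (σ : ℝ)
    (t1 : 0 < cr a b p) (t2 : 0 < cr a b q) (t3 : 0 < cr a b c) (t4 : 0 < cr a b d)
    (t5 : 0 < cr a p q) (t6 : 0 < cr a p c) (t7 : 0 < cr a p d)
    (t8 : 0 < cr a q c) (t9 : 0 < cr a q d) (t10 : 0 < cr a c d)
    (t11 : 0 < cr b p q) (t12 : 0 < cr b p c) (t13 : 0 < cr b p d)
    (t14 : 0 < cr b q c) (t15 : 0 < cr b q d) (t16 : 0 < cr b c d)
    (t17 : 0 < cr p q c) (t18 : 0 < cr p q d) (t19 : 0 < cr p c d) (t20 : 0 < cr q c d)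
    (hfp : Metric.infDist p (segment ℝ a c) ≤ σ)
    (hgq : Metric.infDist q (segment ℝ b d) ≤ σ)
    (hfq : σ < Metric.infDist q (segment ℝ a c))
    (hgp : σ < Metric.infDist p (segment ℝ b d)) : False := by
  obtain ⟨X, hXmem, hXd⟩ :=
    (seg_compact a c).exists_infDist_eq_dist ⟨a, left_mem_segment ℝ a c⟩ p
  obtain ⟨Y, hYmem, hYd⟩ :=
    (seg_compact b d).exists_infDist_eq_dist ⟨b, left_mem_segment ℝ b d⟩ q
  have hpX : dist p X ≤ σ := by rw [← hXd]; exact hfp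
  have hqY : dist q Y ≤ σ := by rw [← hYd]; exact hgq
  have F1 : ∀ z ∈ segment ℝ b d, σ < dist p z := fun z hz =>
    lt_of_lt_of_le hgp (Metric.infDist_le_dist_of_mem hz)
  have F2 : ∀ z ∈ segment ℝ a c, σ < dist q z := fun z hz =>
    lt_of_lt_of_le hfq (Metric.infDist_le_dist_of_mem hz)
  obtain ⟨x, hx0, hx1, hXeq⟩ := seg_mem_iff.mp hXmem
  obtain ⟨y, hy0, hy1, hYeq⟩ := seg_mem_iff.mp hYmem
  -- derived sign facts
  have hbd_a : 0 < cr b d a := by rw [rot, rot]; exact t4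
  have hbd_c : cr b d c < 0 := by rw [sw]; linarith [t16]
  have hbd_p : cr b d p < 0 := by rw [sw]; linarith [t13]
  have hac_b : cr a c b < 0 := by rw [sw]; linarith [t3]
  have hac_q : cr a c q < 0 := by rw [sw]; linarith [t8]
  -- X is strictly on the (p,q,c)-side of line (b,d)
  have hXside' : cr b d ((1 - x) • a + x • c) < 0 := by
    refine side_neg b d a c p a p c a σ x hx0 hx1 hbd_a hbd_c hbd_p ?_ ?_ ?_ ?_ ?_ ?_ ?_ ?_ ?_ ?_ F1 ?_
    · rw [sw]; linarith [t1]
    · exact t7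
    · exact le_of_eq (crzz a p).symm
    · exact le_of_eq (cruvu a p).symm
    · exact le_of_lt t6
    · rw [rot]; exact t3
    · rw [rot, sw]; linarith [t10]
    · rw [rot]; exact le_of_lt t6
    · exact le_of_eq (crzz c a).symm
    · exact le_of_eq (cruvu c a).symm
    · rw [← hXeq]; exact hpX
  have hY2 : (1 - (1 - y)) • d + (1 - y) • b = Y := by
    ext j
    rw [coord_comb, hYeq, coord_comb]; ring
  have hYside : cr a c Y < 0 := by
    rw [← hY2]
    refine side_neg a c d b q d b q d σ (1 - y) (by linarith) (by linarith)
      t10 hac_b hac_q ?_ ?_ ?_ ?_ ?_ ?_ ?_ ?_ ?_ ?_ F2 ?_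
    · rw [sw, rot]; linarith [t4]
    · rw [rot]; exact t16
    · rw [rot]; exact le_of_lt t15
    · exact le_of_eq (cruvu d b).symm
    · exact le_of_eq (crzz d b).symm
    · rw [rot, rot]; exact t9
    · rw [sw]; linarith [t20]
    · exact le_of_eq (cruvu q d).symm
    · exact le_of_eq (crzz q d).symm
    · rw [rot, rot]; exact le_of_lt t15
    · rw [hY2]; exact hqY
  have hXside : cr b d X < 0 := by rw [hXeq]; exact hXside'
  -- the crossing point Z of the two chords
  obtain ⟨z, hzdef⟩ : ∃ zz : ℝ, zz = cr b d a / (cr b d a - cr b d c) := ⟨_, rfl⟩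
  have hzden : (0:ℝ) < cr b d a - cr b d c := by linarith
  have hz0 : 0 < z := hzdef ▸ div_pos hbd_a hzden
  have hz1 : z < 1 := hzdef ▸ (div_lt_one hzden).mpr (by linarith)
  obtain ⟨Z, hZdef⟩ : ∃ ZZ : Pt, ZZ = (1 - z) • a + z • c := ⟨_, rfl⟩
  obtain ⟨z2, hz2def⟩ : ∃ zz : ℝ, zz = cr a c b / (cr a c b - cr a c d) := ⟨_, rfl⟩
  have hz2den : cr a c b - cr a c d < 0 := by linarith [t10]
  have hz20 : 0 < z2 := hz2def ▸ div_pos_of_neg_of_neg hac_b hz2den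
  have hz21 : z2 < 1 := hz2def ▸ (div_lt_one_of_neg hz2den).mpr (by linarith [t10])
  have hZrep : Z = (1 - z2) • b + z2 • d := by
    ext j
    have hd1 : cr b d a - cr b d c ≠ 0 := ne_of_gt hzden
    have hd2 : cr a c b - cr a c d ≠ 0 := ne_of_lt hz2den
    rw [hZdef, coord_comb, coord_comb, hzdef, hz2def]
    simp only [cr] at hd1 hd2 ⊢
    fin_cases j <;> simp only [Fin.zero_eta, Fin.mk_one]
    · field_simp
      ring
    · field_simp
      ring
  -- parameters of X and Y relative to Z
  have hcombX : (1 - x) * cr b d a + x * cr b d c < 0 := by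
    have := hXside
    rw [hXeq, crC] at this
    exact this
  have hcombY : (1 - y) * cr a c b + y * cr a c d < 0 := by
    have := hYside
    rw [hYeq, crC] at this
    exact this
  have hxz : z < x := by
    rw [hzdef, div_lt_iff₀ hzden]
    exact keylin hcombX
  have hyz : y < z2 := by
    rw [hz2def, lt_div_iff_of_neg hz2den]
    exact keylin hcombY
  obtain ⟨s, hsdef⟩ : ∃ ss : ℝ, ss = (x - z) / (1 - z) := ⟨_, rfl⟩
  have hs0 : 0 < s := hsdef ▸ div_pos (by linarith) (by linarith)
  have hs1 : s ≤ 1 := by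
    rw [hsdef, div_le_one (by linarith)]; linarith
  obtain ⟨t, htdef⟩ : ∃ tt : ℝ, tt = (z2 - y) / z2 := ⟨_, rfl⟩
  have ht0 : 0 < t := htdef ▸ div_pos (by linarith) hz20
  have ht1 : t ≤ 1 := by
    rw [htdef, div_le_one hz20]; linarith
  have hXrepZ : X = (1 - s) • Z + s • c := by
    ext j
    rw [hXeq, coord_comb, coord_comb, hZdef, coord_comb, hsdef]
    have h1z : (1:ℝ) - z ≠ 0 := by linarith
    field_simp
    ring
  have hYrepZ : Y = (1 - t) • Z + t • b := by
    ext j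
    rw [hYeq, coord_comb, coord_comb, hZrep, coord_comb, htdef]
    have h2z : z2 ≠ 0 := ne_of_gt hz20
    field_simp
    ring
  -- positivity of the cross products at Z
  have hQZb : 0 < cr q Z b := by
    rw [hZdef, crB]
    have e1 : 0 < cr q a b := by rw [rot]; exact t2
    have e2 : 0 < cr q c b := by rw [rot, rot]; exact t14
    exact combo_pos e1 e2 (le_of_lt hz0) (le_of_lt hz1)
  have hQcZ : 0 < cr q c Z := by
    rw [hZrep, crC]
    have e1 : 0 < cr q c b := by rw [rot, rot]; exact t14
    exact combo_pos e1 t20 (le_of_lt hz20) (le_of_lt hz21)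
  have hQcb : 0 < cr q c b := by rw [rot, rot]; exact t14
  have hZbp : 0 < cr Z b p := by
    rw [hZdef, crA]
    have e1 : 0 < cr c b p := by rw [rot]; exact t12
    exact combo_pos t1 e1 (le_of_lt hz0) (le_of_lt hz1)
  have hcZp : 0 < cr c Z p := by
    rw [hZrep, crB]
    have e1 : 0 < cr c b p := by rw [rot]; exact t12
    have e2 : 0 < cr c d p := by rw [rot, rot]; exact t19
    exact combo_pos e1 e2 (le_of_lt hz20) (le_of_lt hz21)
  have hcbp : 0 < cr c b p := by rw [rot]; exact t12
  -- orientation facts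
  have O1 : 0 < cr Y p q := by
    rw [hYeq, crA]
    have e1 : 0 < cr d p q := by rw [rot]; exact t18
    exact combo_pos t11 e1 hy0 hy1
  have O2 : 0 < cr p q X := by
    rw [hXeq, crC]
    have e1 : 0 < cr p q a := by rw [rot, rot]; exact t5
    exact combo_pos e1 t17 hx0 hx1
  have O3 : 0 < cr q X Y := by
    rw [hXrepZ, hYrepZ, crB, crC, crC, crzz]
    exact tri_pos hQZb hQcZ hQcb hs0 hs1 ht0 ht1
  have O4 : 0 < cr X Y p := by
    rw [hXrepZ, hYrepZ, crA, crB, crB, cruuw]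
    exact tri_pos hZbp hcZp hcbp hs0 hs1 ht0 ht1
  -- intersection of the segments [p,X] and [q,Y]
  have c1pos : 0 < cr q Y p := by rw [rot]; exact O1
  have c2neg : cr q Y X < 0 := by rw [sw]; linarith [O3]
  have d1neg : cr p X q < 0 := by rw [sw]; linarith [O2]
  have d2pos : 0 < cr p X Y := by rw [rot]; exact O4
  obtain ⟨tst, htst⟩ : ∃ tt : ℝ, tt = cr q Y p / (cr q Y p - cr q Y X) := ⟨_, rfl⟩
  have htden : (0:ℝ) < cr q Y p - cr q Y X := by linarith
  have htst0 : 0 < tst := htst ▸ div_pos c1pos htden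
  have htst1 : tst ≤ 1 := htst ▸ le_of_lt ((div_lt_one htden).mpr (by linarith))
  obtain ⟨sst, hsst⟩ : ∃ ss : ℝ, ss = cr p X q / (cr p X q - cr p X Y) := ⟨_, rfl⟩
  have hsden : cr p X q - cr p X Y < 0 := by linarith
  have hsst0 : 0 < sst := hsst ▸ div_pos_of_neg_of_neg d1neg hsden
  have hsst1 : sst ≤ 1 := hsst ▸ le_of_lt ((div_lt_one_of_neg hsden).mpr (by linarith))
  obtain ⟨ypt, hypt⟩ : ∃ yy : Pt, yy = (1 - tst) • p + tst • X := ⟨_, rfl⟩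
  have mem1 : ypt ∈ segment ℝ p X := seg_mem_iff.mpr ⟨tst, le_of_lt htst0, htst1, hypt⟩
  have hy2 : ypt = (1 - sst) • q + sst • Y := by
    ext j
    have hd1 : (cr q Y p - cr q Y X) ≠ 0 := ne_of_gt htden
    have hd2 : (cr p X q - cr p X Y) ≠ 0 := ne_of_lt hsden
    rw [hypt, coord_comb, coord_comb, htst, hsst]
    simp only [cr] at hd1 hd2 ⊢
    fin_cases j <;> simp only [Fin.zero_eta, Fin.mk_one]
    · field_simp
      ring
    · field_simp
      ring
  have mem2 : ypt ∈ segment ℝ q Y := seg_mem_iff.mpr ⟨sst, le_of_lt hsst0, hsst1, hy2⟩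
  have e1 := dist_add_dist_of_mem_segment mem1
  have e2 := dist_add_dist_of_mem_segment mem2
  have hpY : σ < dist p Y := F1 Y hYmem
  have hqX : σ < dist q X := F2 X hXmem
  have tri1 : dist p Y ≤ dist p ypt + dist ypt Y := dist_triangle p ypt Y
  have tri2 : dist q X ≤ dist q ypt + dist ypt X := dist_triangle q ypt X
  linarith


lemma ccw3_cr {a b c : Pt} (h : ccw3 a b c) : 0 < cr a b c := h

theorem witness_at_constant_offset (n m : ℕ) [NeZero n] (hm : 1 ≤ m) (hn : m + 2 < n)
    (σ : ℝ) (hσ : 0 < σ)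
    (v : ZMod n → Pt) (hconv : ConvexCCW v)
    (w : ZMod n → ZMod n) (hbij : Function.Bijective w)
    (hwit : ∀ i : ZMod n, CBtw i (w i) (i + (m : ZMod n) + 1) ∧
      σ < Metric.infDist (v (w i)) (segment ℝ (v i) (v (i + (m : ZMod n) + 1))) ∧
      ∀ x : ZMod n, CBtw i x (i + (m : ZMod n) + 1) → x ≠ w i →
        Metric.infDist (v x) (segment ℝ (v i) (v (i + (m : ZMod n) + 1))) ≤ σ) :
    ∃ r : ℕ, 0 < r ∧ r ≤ m ∧ ∀ i : ZMod n, w i = i + (r : ZMod n) := by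
  classical
  have hn4 : 4 ≤ n := by omega
  set r : ZMod n → ℕ := fun i => (w i - i).val with hrdef
  have hcast : ∀ i : ZMod n, i + (m : ZMod n) + 1 = i + ((m + 1 : ℕ) : ZMod n) := by
    intro i; push_cast; ring
  have hr_lb : ∀ i, 0 < r i := fun i => ((hwit i).1).1
  have hr_ub : ∀ i, r i ≤ m := by
    intro i
    have h2 := ((hwit i).1).2
    rw [hcast i, add_sub_cancel_left, ZMod.val_cast_of_lt (by omega : m + 1 < n)] at h2
    have e : r i = (w i - i).val := rfl
    omega
  have hw_eq : ∀ i, w i = i + ((r i : ℕ) : ZMod n) := by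
    intro i
    have e : ((r i : ℕ) : ZMod n) = w i - i := by
      simp only [hrdef, ZMod.natCast_val, ZMod.cast_id]
    rw [e]; ring
  have hcb : ∀ (i : ZMod n) (x y z : ℕ), x < y → y < z → z < n →
      CBtw (i + (x : ZMod n)) (i + (y : ZMod n)) (i + (z : ZMod n)) := by
    intro i x y z hxy hyz hzn
    have e1 : (i + (y : ZMod n)) - (i + (x : ZMod n)) = ((y - x : ℕ) : ZMod n) := by
      push_cast [Nat.cast_sub (le_of_lt hxy)]; ring
    have e2 : (i + (z : ZMod n)) - (i + (x : ZMod n)) = ((z - x : ℕ) : ZMod n) := by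
      push_cast [Nat.cast_sub (by omega : x ≤ z)]; ring
    constructor
    · rw [e1, ZMod.val_cast_of_lt (by omega)]; omega
    · rw [e1, e2, ZMod.val_cast_of_lt (by omega), ZMod.val_cast_of_lt (by omega)]; omega
  have hstep : ∀ i : ZMod n, r i ≤ r (i + 1) := by
    intro i
    by_contra hlt
    push_neg at hlt
    rcases eq_or_lt_of_le (Nat.succ_le_of_lt hlt) with heq | hlt2
    · -- r (i+1) + 1 = r i : contradicts injectivity
      have hww : w (i + 1) = w i := by
        rw [hw_eq (i + 1), hw_eq i, ← heq]
        push_cast; ring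
      have hii : i + 1 = i := hbij.injective hww
      have h10 : ((1 : ℕ) : ZMod n) = ((0 : ℕ) : ZMod n) := by
        have := congrArg (· - i) hii
        simpa using this
      have := ZMod.val_cast_of_lt (by omega : 1 < n)
      rw [h10, ZMod.val_cast_of_lt (by omega : 0 < n)] at this
      omega
    · -- r (i+1) + 1 < r i : hexagon contradiction
      have hccw : ∀ x y z : ℕ, x < y → y < z → z < n →
          0 < cr (v (i + (x : ZMod n))) (v (i + (y : ZMod n))) (v (i + (z : ZMod n))) :=
        fun x y z h1 h2 h3 => ccw3_cr (hconv _ _ _ (hcb i x y z h1 h2 h3))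
      have hu2 : 2 ≤ r (i + 1) + 1 := by have := hr_lb (i + 1); omega
      have hRm : r i ≤ m := hr_ub i
      have hum : r (i + 1) + 1 < r i := hlt2
      have e0 : i + ((0 : ℕ) : ZMod n) = i := by push_cast; ring
      have e1 : i + ((1 : ℕ) : ZMod n) = i + 1 := by push_cast; ring
      have eu : i + ((r (i + 1) + 1 : ℕ) : ZMod n) = w (i + 1) := by
        rw [hw_eq (i + 1)]; push_cast; ring
      have eR : i + ((r i : ℕ) : ZMod n) = w i := (hw_eq i).symm
      have ec : i + ((m + 1 : ℕ) : ZMod n) = i + (m : ZMod n) + 1 := by push_cast; ring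
      have ed : i + ((m + 2 : ℕ) : ZMod n) = (i + 1) + (m : ZMod n) + 1 := by push_cast; ring
      have hneq : w (i + 1) ≠ w i := by
        intro hcontra
        rw [← eu, ← eR] at hcontra
        have := add_left_cancel hcontra
        have h1 := ZMod.val_cast_of_lt (by omega : r (i + 1) + 1 < n)
        have h2 := ZMod.val_cast_of_lt (by omega : r i < n)
        rw [this, h2] at h1
        omega
      have hCB1 : CBtw i (w (i + 1)) (i + (m : ZMod n) + 1) := by
        have := hcb i 0 (r (i + 1) + 1) (m + 1) (by omega) (by omega) (by omega)
        rwa [e0, eu, ec] at this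
      have hCB2 : CBtw (i + 1) (w i) ((i + 1) + (m : ZMod n) + 1) := by
        have := hcb i 1 (r i) (m + 2) (by omega) (by omega) (by omega)
        rwa [e1, eR, ed] at this
      have hfp' := (hwit i).2.2 (w (i + 1)) hCB1 hneq
      have hfq' := (hwit i).2.1
      have hgp' := (hwit (i + 1)).2.1
      have hgq' := (hwit (i + 1)).2.2 (w i) hCB2 (Ne.symm hneq)
      exact hex (v i) (v (i + 1)) (v (w (i + 1))) (v (w i))
        (v (i + (m : ZMod n) + 1)) (v ((i + 1) + (m : ZMod n) + 1)) σ
        (by have h := hccw 0 1 (r (i + 1) + 1) (by omega) (by omega) (by omega); simpa only [e0, e1, eu, eR, ec, ed] using h)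
        (by have h := hccw 0 1 (r i) (by omega) (by omega) (by omega); simpa only [e0, e1, eu, eR, ec, ed] using h)
        (by have h := hccw 0 1 (m + 1) (by omega) (by omega) (by omega); simpa only [e0, e1, eu, eR, ec, ed] using h)
        (by have h := hccw 0 1 (m + 2) (by omega) (by omega) (by omega); simpa only [e0, e1, eu, eR, ec, ed] using h)
        (by have h := hccw 0 (r (i + 1) + 1) (r i) (by omega) (by omega) (by omega); simpa only [e0, e1, eu, eR, ec, ed] using h)
        (by have h := hccw 0 (r (i + 1) + 1) (m + 1) (by omega) (by omega) (by omega); simpa only [e0, e1, eu, eR, ec, ed] using h)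
        (by have h := hccw 0 (r (i + 1) + 1) (m + 2) (by omega) (by omega) (by omega); simpa only [e0, e1, eu, eR, ec, ed] using h)
        (by have h := hccw 0 (r i) (m + 1) (by omega) (by omega) (by omega); simpa only [e0, e1, eu, eR, ec, ed] using h)
        (by have h := hccw 0 (r i) (m + 2) (by omega) (by omega) (by omega); simpa only [e0, e1, eu, eR, ec, ed] using h)
        (by have h := hccw 0 (m + 1) (m + 2) (by omega) (by omega) (by omega); simpa only [e0, e1, eu, eR, ec, ed] using h)
        (by have h := hccw 1 (r (i + 1) + 1) (r i) (by omega) (by omega) (by omega); simpa only [e0, e1, eu, eR, ec, ed] using h)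
        (by have h := hccw 1 (r (i + 1) + 1) (m + 1) (by omega) (by omega) (by omega); simpa only [e0, e1, eu, eR, ec, ed] using h)
        (by have h := hccw 1 (r (i + 1) + 1) (m + 2) (by omega) (by omega) (by omega); simpa only [e0, e1, eu, eR, ec, ed] using h)
        (by have h := hccw 1 (r i) (m + 1) (by omega) (by omega) (by omega); simpa only [e0, e1, eu, eR, ec, ed] using h)
        (by have h := hccw 1 (r i) (m + 2) (by omega) (by omega) (by omega); simpa only [e0, e1, eu, eR, ec, ed] using h)
        (by have h := hccw 1 (m + 1) (m + 2) (by omega) (by omega) (by omega); simpa only [e0, e1, eu, eR, ec, ed] using h)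
        (by have h := hccw (r (i + 1) + 1) (r i) (m + 1) (by omega) (by omega) (by omega); simpa only [e0, e1, eu, eR, ec, ed] using h)
        (by have h := hccw (r (i + 1) + 1) (r i) (m + 2) (by omega) (by omega) (by omega); simpa only [e0, e1, eu, eR, ec, ed] using h)
        (by have h := hccw (r (i + 1) + 1) (m + 1) (m + 2) (by omega) (by omega) (by omega); simpa only [e0, e1, eu, eR, ec, ed] using h)
        (by have h := hccw (r i) (m + 1) (m + 2) (by omega) (by omega) (by omega); simpa only [e0, e1, eu, eR, ec, ed] using h)
        hfp' hgq' hfq' hgp'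
  have chain : ∀ (a : ZMod n) (j : ℕ), r a ≤ r (a + (j : ZMod n)) := by
    intro a j
    induction j with
    | zero => simp
    | succ jj ih =>
      have e : a + ((jj + 1 : ℕ) : ZMod n) = (a + (jj : ZMod n)) + 1 := by push_cast; ring
      rw [e]
      exact le_trans ih (hstep (a + (jj : ZMod n)))
  have hconst : ∀ i, r i = r 0 := by
    intro i
    have h1 : r 0 ≤ r i := by
      have := chain 0 i.val
      rwa [zero_add, ZMod.natCast_val, ZMod.cast_id] at this
    have h2 : r i ≤ r 0 := by
      have := chain i (n - i.val)
      have e : i + ((n - i.val : ℕ) : ZMod n) = 0 := by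
        rw [Nat.cast_sub (le_of_lt (ZMod.val_lt i)), ZMod.natCast_self, ZMod.natCast_val,
          ZMod.cast_id]
        ring
      rwa [e] at this
    omega
  exact ⟨r 0, hr_lb 0, hr_ub 0, fun i => by rw [hw_eq i, hconst i]⟩
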